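/- arXiv:1406.6031 — 2 statements merged into one kernel-verified Lean document; each statement's English description precedes it below -/
import Mathlib

section
/- Let F₀ be a continuous distribution function on ℝ and suppose X ~ F₀((x-μ)/σ) with σ > 0. Let F⁺ be a reference distribution function for |Z| satisfying sup_{u ≥ η} (F⁺(u) - F₀⁺(u)) ≤ 0, where F₀⁺ is the distribution function of |(X-μ)/σ|. Let T₀ₙ → μ a.s. and S₀ₙ → σ a.s., set Ẑᵢ = (Xᵢ - T₀ₙ)/S₀ₙ for an i.i.d. sample X₁,...,Xₙ, let F̂ₙ⁺ be the empirical distribution of |Ẑᵢ|, and define dₙ = sup_{t ≥ η} {F⁺(t) - F̂ₙ⁺(t)}⁺. Then the proportion of flagged outliers n₀/n = ⌊n·dₙ⌋/n → 0 almost surely. -/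
open MeasureTheory ProbabilityTheory Filter Finset
open Topology


lemma gy_aux_atom (P : Measure ℝ) [IsProbabilityMeasure P] (F : ℝ → ℝ)
    (hF : Continuous F) (hcdf : ∀ x, (P (Set.Iic x)).toReal = F x) (a : ℝ) :
    P {a} = 0 := by
  have hfin : ∀ s : Set ℝ, P s ≠ ⊤ := fun s => measure_ne_top P s
  have key : ∀ b : ℝ, b < a → (P {a}).toReal ≤ F a - F b := by
    intro b hb
    have hsub : {a} ⊆ Set.Ioc b a := by
      simp [Set.singleton_subset_iff, hb]
    have hmono : P (Set.Iic b) ≤ P (Set.Iic a) := measure_mono (Set.Iic_subset_Iic.2 hb.le)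
    have h1 : P (Set.Ioc b a) = P (Set.Iic a) - P (Set.Iic b) := by
      rw [← Set.Iic_sdiff_Iic]
      exact measure_diff (Set.Iic_subset_Iic.2 hb.le) measurableSet_Iic.nullMeasurableSet (hfin _)
    calc (P {a}).toReal ≤ (P (Set.Ioc b a)).toReal :=
          ENNReal.toReal_mono (hfin _) (measure_mono hsub)
      _ = F a - F b := by
          rw [h1, ENNReal.toReal_sub_of_le hmono (hfin _), hcdf, hcdf]
  have hseq : Tendsto (fun k : ℕ => a - 1/(k+1 : ℝ)) atTop (𝓝 a) := by
    have := tendsto_one_div_add_atTop_nhds_zero_nat (𝕜 := ℝ)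
    have h2 := tendsto_const_nhds (x := a) (f := atTop (α := ℕ)) |>.sub this
    simpa using h2
  have hlim : Tendsto (fun k : ℕ => F a - F (a - 1/(k+1 : ℝ))) atTop (𝓝 (F a - F a)) :=
    tendsto_const_nhds.sub ((hF.tendsto a).comp hseq)
  have hle : (P {a}).toReal ≤ F a - F a := by
    refine ge_of_tendsto' hlim ?_
    intro k
    refine key _ ?_
    have : (0:ℝ) < 1/(k+1 : ℝ) := by positivity
    linarith
  have h0 : (P {a}).toReal = 0 := le_antisymm (by simpa using hle) ENNReal.toReal_nonneg
  have := (ENNReal.toReal_eq_zero_iff _).1 h0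
  rcases this with h | h
  · exact h
  · exact absurd h (hfin _)

lemma gy_aux_Icc (P : Measure ℝ) [IsProbabilityMeasure P] (F : ℝ → ℝ)
    (hF : Continuous F) (hcdf : ∀ x, (P (Set.Iic x)).toReal = F x) {a b : ℝ} (hab : a ≤ b) :
    (P (Set.Icc a b)).toReal = F b - F a := by
  have hfin : ∀ s : Set ℝ, P s ≠ ⊤ := fun s => measure_ne_top P s
  have hIio : P (Set.Iio a) = P (Set.Iic a) := by
    refine le_antisymm (measure_mono Set.Iio_subset_Iic_self) ?_
    have : Set.Iic a ⊆ Set.Iio a ∪ {a} := by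
      intro x hx
      rcases (Set.mem_Iic.1 hx).lt_or_eq with h | h
      · exact Or.inl h
      · exact Or.inr (by simp [h])
    calc P (Set.Iic a) ≤ P (Set.Iio a ∪ {a}) := measure_mono this
      _ ≤ P (Set.Iio a) + P {a} := measure_union_le _ _
      _ = P (Set.Iio a) := by rw [gy_aux_atom P F hF hcdf a, add_zero]
  have hsub : Set.Iio a ⊆ Set.Iic b := fun x hx => le_trans (le_of_lt hx) hab
  have h1 : P (Set.Icc a b) = P (Set.Iic b) - P (Set.Iio a) := by
    rw [← Set.Iic_sdiff_Iio]
    exact measure_diff hsub measurableSet_Iio.nullMeasurableSet (hfin _)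
  rw [h1, hIio, ENNReal.toReal_sub_of_le (measure_mono (Set.Iic_subset_Iic.2 hab)) (hfin _),
    hcdf, hcdf]


lemma gy_aux_slln {Ω : Type*} [MeasurableSpace Ω] (μ : Measure Ω) [IsProbabilityMeasure μ]
    (X : ℕ → Ω → ℝ) (hXmeas : ∀ i, Measurable (X i))
    (hindep : iIndepFun X μ)
    (P : Measure ℝ) [IsProbabilityMeasure P] (hlaw : ∀ i, μ.map (X i) = P)
    (c q : ℝ) :
    ∀ᵐ ω ∂μ, Tendsto (fun n : ℕ => (∑ i ∈ range n,
        (if |X i ω - c| ≤ q then (1:ℝ) else 0)) / n) atTop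
      (𝓝 ((P {x : ℝ | |x - c| ≤ q}).toReal)) := by
  set s : Set ℝ := {x : ℝ | |x - c| ≤ q} with hs_def
  have hs : MeasurableSet s :=
    (isClosed_le (by continuity) continuous_const).measurableSet
  set φ : ℝ → ℝ := s.indicator (fun _ => (1:ℝ)) with hφ_def
  have hφmeas : Measurable φ := measurable_const.indicator hs
  have hφeq : ∀ x : ℝ, φ x = if |x - c| ≤ q then (1:ℝ) else 0 := by
    intro x; simp [hφ_def, Set.indicator_apply, hs_def, Set.mem_setOf_eq]
  set Y : ℕ → Ω → ℝ := fun i ω => φ (X i ω) with hY_def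
  have hYint : Integrable (Y 0) μ := by
    refine (integrable_const (1:ℝ)).mono'
      ((hφmeas.comp (hXmeas 0)).aestronglyMeasurable) (ae_of_all _ fun ω => ?_)
    simp only [hY_def, hφeq]
    split_ifs <;> simp
  have hYindep : Pairwise (Function.onFun (IndepFun · · μ) Y) := fun i j hij =>
    (hindep.indepFun hij).comp hφmeas hφmeas
  have hYid : ∀ i, IdentDistrib (Y i) (Y 0) μ μ := by
    intro i
    have hXid : IdentDistrib (X i) (X 0) μ μ :=
      ⟨(hXmeas i).aemeasurable, (hXmeas 0).aemeasurable, by rw [hlaw i, hlaw 0]⟩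
    exact hXid.comp hφmeas
  have hmean : μ[Y 0] = (P s).toReal := by
    have h1 : μ[Y 0] = ∫ x, φ x ∂(μ.map (X 0)) :=
      (integral_map (hXmeas 0).aemeasurable hφmeas.aestronglyMeasurable).symm
    rw [h1, hlaw 0, hφ_def]
    exact integral_indicator_one hs
  have := strong_law_ae_real Y hYint hYindep hYid
  rw [hmean] at this
  filter_upwards [this] with ω hω
  have heq : ∀ n : ℕ, (∑ i ∈ range n, (if |X i ω - c| ≤ q then (1:ℝ) else 0)) / n
      = (∑ i ∈ range n, Y i ω) / n := by
    intro n
    congr 1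
  simpa only [heq] using hω


set_option maxHeartbeats 2000000 in
lemma gy_aux_core (x : ℕ → ℝ) (Tn Sn : ℕ → ℝ) (μ₀ σ₀ η : ℝ) (H Fplus : ℝ → ℝ)
    (hσ₀ : 0 < σ₀) (hSpos : ∀ n, 0 < Sn n)
    (hT : Tendsto Tn atTop (𝓝 μ₀)) (hS : Tendsto Sn atTop (𝓝 σ₀))
    (hHmono : Monotone H) (hHcont : Continuous H) (hH0 : H 0 = 0) (hHle1 : ∀ r, H r ≤ 1)
    (hHtop : Tendsto H atTop (𝓝 1))
    (hE : ∀ q : ℚ, Tendsto (fun n : ℕ =>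
        (∑ i ∈ range n, (if |x i - μ₀| ≤ (q:ℝ) then (1:ℝ) else 0)) / n) atTop (𝓝 (H q)))
    (hFplus : ∀ t : ℝ, η ≤ t → Fplus t ≤ H (σ₀ * t))
    {ε : ℝ} (hε : 0 < ε) :
    ∀ᶠ n : ℕ in atTop, ∀ t : ℝ, η ≤ t →
      Fplus t ≤ (1/n : ℝ) * ∑ i ∈ range n,
        (if |(x i - Tn n)/Sn n| ≤ t then (1:ℝ) else 0) + ε := by
  -- Step 1 : choose M
  have h14 : (0:ℝ) < ε/4 := by linarith
  obtain ⟨r₀, hr₀⟩ := (eventually_atTop).1 (hHtop.eventually (eventually_gt_nhds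
    (show 1 - ε/4 < 1 by linarith)))
  set M : ℝ := max (max η 0 + 1) ((r₀ + 1)/σ₀) with hM_def
  have hM1 : max η 0 + 1 ≤ M := le_max_left _ _
  have hMpos : (1:ℝ) ≤ M := le_trans (by have := le_max_right η 0; linarith) hM1
  have hMη : η ≤ M := le_trans (by have := le_max_left η 0; linarith) hM1
  have hMH : 1 - ε/4 < H (σ₀ * M) := by
    refine hr₀ _ ?_
    have h1 : (r₀ + 1)/σ₀ ≤ M := le_max_right _ _
    have := (div_le_iff₀ hσ₀).1 h1
    linarith [this]
  clear_value M
  -- Step 2 : uniform continuity of H on a compact interval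
  have hUC : UniformContinuousOn H (Set.Icc (-1 : ℝ) (σ₀*M + 1)) :=
    isCompact_Icc.uniformContinuousOn_of_continuous hHcont.continuousOn
  obtain ⟨δ', hδ'pos, hδ'⟩ := Metric.uniformContinuousOn_iff.1 hUC (ε/4) h14
  set δ : ℝ := min δ' 1 with hδ_def
  have hδpos : 0 < δ := lt_min hδ'pos one_pos
  have hδ1 : δ ≤ 1 := min_le_right _ _
  have hδle : δ ≤ δ' := min_le_left _ _
  clear_value δ
  -- Step 3 : δ₂
  set δ₂ : ℝ := min (min (σ₀/2) (1/2)) (δ/(2*(M+4))) with hδ₂_def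
  have hM4 : (0:ℝ) < M + 4 := by linarith
  have hδ₂pos : 0 < δ₂ := lt_min (lt_min (by linarith) (by norm_num)) (by positivity)
  have hδ₂σ : δ₂ ≤ σ₀/2 := le_trans (min_le_left _ _) (min_le_left _ _)
  have hδ₂half : δ₂ ≤ 1/2 := le_trans (min_le_left _ _) (min_le_right _ _)
  have hδ₂δ : δ₂ ≤ δ/(2*(M+4)) := min_le_right _ _
  have hσδ₂ : 0 < σ₀ - δ₂ := by linarith
  clear_value δ₂
  -- Step 4 : K
  obtain ⟨K, hK⟩ := exists_nat_gt (max 1 (4*σ₀*M/δ))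
  have hK1 : (1:ℝ) < K := lt_of_le_of_lt (le_max_left _ _) hK
  have hKpos : (0:ℝ) < K := by linarith
  have hKne : (K:ℝ) ≠ 0 := ne_of_gt hKpos
  have hKδ : σ₀*M/K < δ/4 := by
    have h1 : 4*σ₀*M/δ < K := lt_of_le_of_lt (le_max_right _ _) hK
    rw [div_lt_iff₀ hKpos]
    rw [div_lt_iff₀ hδpos] at h1
    nlinarith [hMpos, hσ₀, hδpos]
  -- grid
  set tg : ℕ → ℝ := fun j => ((min j K : ℕ) : ℝ) * M / K with htg_def
  have htg_nonneg : ∀ j, 0 ≤ tg j := by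
    intro j; have : (0:ℝ) ≤ ((min j K : ℕ) : ℝ) := Nat.cast_nonneg _
    have hM0 : (0:ℝ) ≤ M := by linarith
    positivity
  have htg_leM : ∀ j, tg j ≤ M := by
    intro j
    rw [htg_def]
    rw [div_le_iff₀ hKpos]
    have h1 : ((min j K : ℕ) : ℝ) ≤ K := by exact_mod_cast Nat.cast_le.2 (min_le_right j K)
    nlinarith [hMpos]
  have htg_mono : Monotone tg := by
    intro a b hab
    have h1 : ((min a K : ℕ):ℝ) ≤ ((min b K : ℕ):ℝ) := by
      exact_mod_cast min_le_min hab (le_refl K)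
    have hM0 : (0:ℝ) ≤ M := by linarith
    show ((min a K : ℕ):ℝ) * M / K ≤ ((min b K : ℕ):ℝ) * M / K
    have h2 : ((min a K : ℕ):ℝ) * M ≤ ((min b K : ℕ):ℝ) * M := by nlinarith
    exact (div_le_div_iff_of_pos_right hKpos).2 h2
  have htg_step : ∀ j : ℕ, tg (j+1) ≤ tg j + M/K := by
    intro j
    have h1 : min (j+1) K ≤ min j K + 1 := by omega
    have h1' : ((min (j+1) K : ℕ):ℝ) ≤ ((min j K : ℕ):ℝ) + 1 := by exact_mod_cast h1
    have hM0 : (0:ℝ) ≤ M := by linarith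
    show ((min (j+1) K : ℕ):ℝ) * M / K ≤ ((min j K : ℕ):ℝ) * M / K + M/K
    rw [← add_div]
    refine (div_le_div_iff_of_pos_right hKpos).2 ?_
    nlinarith
  have htg_ge : ∀ j : ℕ, K ≤ j → tg j = M := by
    intro j hj
    show ((min j K : ℕ):ℝ) * M / K = M
    rw [min_eq_right hj]
    field_simp
  have htg_eq : ∀ j : ℕ, j ≤ K → tg j = (j:ℝ) * M / K := by
    intro j hj
    show ((min j K : ℕ):ℝ) * M / K = (j:ℝ) * M / K
    rw [min_eq_left hj]
  clear_value tg
  -- rational grid points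
  have hqex : ∀ j : ℕ, ∃ qq : ℚ, (σ₀ - δ₂) * tg j - 2*δ₂ < (qq:ℝ) ∧
      (qq:ℝ) < (σ₀ - δ₂) * tg j - δ₂ := fun j => exists_rat_btwn (by linarith)
  choose q hq1 hq2 using hqex
  have hq_mem : ∀ j : ℕ, ((q j : ℝ)) ∈ Set.Icc (-1 : ℝ) (σ₀*M + 1) := by
    intro j
    constructor
    · have h0 : 0 ≤ (σ₀ - δ₂) * tg j := mul_nonneg (le_of_lt hσδ₂) (htg_nonneg j)
      have := hq1 j
      linarith
    · have a1 : 0 ≤ δ₂ * tg j := mul_nonneg (le_of_lt hδ₂pos) (htg_nonneg j)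
      have a2 : σ₀ * tg j ≤ σ₀ * M := mul_le_mul_of_nonneg_left (htg_leM j) (le_of_lt hσ₀)
      have e : (σ₀ - δ₂) * tg j = σ₀ * tg j - δ₂ * tg j := by ring
      have := hq2 j
      linarith
  have hqtg_mem : ∀ j : ℕ, σ₀ * tg j ∈ Set.Icc (-1 : ℝ) (σ₀*M + 1) := by
    intro j
    have a1 : 0 ≤ σ₀ * tg j := mul_nonneg (le_of_lt hσ₀) (htg_nonneg j)
    have a2 : σ₀ * tg j ≤ σ₀ * M := mul_le_mul_of_nonneg_left (htg_leM j) (le_of_lt hσ₀)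
    constructor
    · linarith
    · linarith
  -- uniform continuity claim
  have hUCj : ∀ j : ℕ, H (σ₀ * tg (j+1)) ≤ H (q j) + ε/4 := by
    intro j
    have hupper : σ₀ * tg (j+1) - (q j : ℝ) < δ := by
      have hst := htg_step j
      have h1 := hq1 j
      have hδ₂M : δ₂ * (M+2) ≤ δ/2 := by
        have h2 : δ₂ * (2*(M+4)) ≤ δ := by
          have := (le_div_iff₀ (by linarith : (0:ℝ) < 2*(M+4))).1 hδ₂δ
          linarith
        nlinarith [hδ₂pos]
      have e1 : σ₀ * tg (j+1) ≤ σ₀ * tg j + σ₀ * M / K := by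
        have := mul_le_mul_of_nonneg_left hst (le_of_lt hσ₀)
        have e2 : σ₀ * (tg j + M/K) = σ₀ * tg j + σ₀ * M / K := by ring
        linarith
      have e3 : δ₂ * tg j ≤ δ₂ * M := by nlinarith [htg_leM j, hδ₂pos]
      have e4 : (σ₀ - δ₂) * tg j = σ₀ * tg j - δ₂ * tg j := by ring
      linarith
    have hlower : 0 < σ₀ * tg (j+1) - (q j : ℝ) := by
      have h2 := hq2 j
      have hmono := htg_mono (Nat.le_succ j)
      nlinarith [htg_nonneg j, hδ₂pos]
    have hdist : dist (σ₀ * tg (j+1)) ((q j : ℝ)) < δ' := by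
      rw [Real.dist_eq, abs_lt]
      constructor
      · linarith [hδpos, hδle]
      · linarith [hδle]
    have := hδ' _ (hqtg_mem (j+1)) _ (hq_mem j) hdist
    rw [Real.dist_eq, abs_lt] at this
    linarith [this.1]
  -- eventual statements
  have hEv1 : ∀ᶠ n : ℕ in atTop, |Tn n - μ₀| < δ₂ := by
    filter_upwards [hT (Metric.ball_mem_nhds μ₀ hδ₂pos)] with n hn
    simpa [Real.dist_eq] using hn
  have hEv2 : ∀ᶠ n : ℕ in atTop, σ₀ - δ₂ < Sn n :=
    hS.eventually (eventually_gt_nhds (by linarith))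
  have hEv3 : ∀ᶠ n : ℕ in atTop, ∀ j ∈ Finset.range (K+1),
      H (q j) - ε/4 < (∑ i ∈ range n, (if |x i - μ₀| ≤ ((q j : ℝ)) then (1:ℝ) else 0)) / n := by
    rw [eventually_all_finset]
    intro j _
    exact (hE (q j)).eventually (eventually_gt_nhds (by linarith))
  filter_upwards [hEv1, hEv2, hEv3] with n h1 h2 h3
  set Fh : ℝ → ℝ := fun s => (1/n : ℝ) * ∑ i ∈ range n,
    (if |(x i - Tn n)/Sn n| ≤ s then (1:ℝ) else 0) with hFh_def
  intro t ht
  show Fplus t ≤ Fh t + ε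
  have hninv : (0:ℝ) ≤ 1/n := by positivity
  have hFh_mono : Monotone Fh := by
    intro a b hab
    refine mul_le_mul_of_nonneg_left (Finset.sum_le_sum fun i _ => ?_) hninv
    split_ifs with hia hib
    · exact le_refl _
    · exact absurd (le_trans hia hab) hib
    · norm_num
    · exact le_refl _
  have hFh_nonneg : ∀ s, 0 ≤ Fh s := by
    intro s
    refine mul_nonneg hninv (Finset.sum_nonneg fun i _ => ?_)
    split_ifs <;> norm_num
  have hB : ∀ j : ℕ,
      (∑ i ∈ range n, (if |x i - μ₀| ≤ ((q j : ℝ)) then (1:ℝ) else 0)) / n ≤ Fh (tg j) := by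
    intro j
    have he : (∑ i ∈ range n, (if |x i - μ₀| ≤ ((q j : ℝ)) then (1:ℝ) else 0)) / n
        = (1/n : ℝ) * ∑ i ∈ range n, (if |x i - μ₀| ≤ ((q j : ℝ)) then (1:ℝ) else 0) := by
      ring
    rw [he]
    refine mul_le_mul_of_nonneg_left (Finset.sum_le_sum fun i _ => ?_) hninv
    split_ifs with hia hib
    · exact le_refl _
    · exfalso
      apply hib
      have habs1 : |x i - Tn n| ≤ |x i - μ₀| + |μ₀ - Tn n| := abs_sub_le _ _ _
      have habs2 : |μ₀ - Tn n| = |Tn n - μ₀| := abs_sub_comm _ _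
      have hqb := hq2 j
      have hmul : (σ₀ - δ₂) * tg j ≤ Sn n * tg j :=
        mul_le_mul_of_nonneg_right (le_of_lt h2) (htg_nonneg j)
      have habs : |x i - Tn n| ≤ Sn n * tg j := by
        rw [habs2] at habs1
        linarith
      rw [abs_div, abs_of_pos (hSpos n), div_le_iff₀ (hSpos n)]
      linarith [habs]
    · norm_num
    · exact le_refl _
  have hFp : Fplus t ≤ H (σ₀ * t) := hFplus t ht
  by_cases ht0 : t < 0
  · have h4 : H (σ₀ * t) ≤ 0 := by
      rw [← hH0]
      exact hHmono (by nlinarith)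
    have h5 := hFh_nonneg t
    linarith
  push_neg at ht0
  by_cases htM : M ≤ t
  · have c1 : H (σ₀ * t) ≤ 1 := hHle1 _
    have c2 := hUCj K
    rw [htg_ge (K+1) (Nat.le_succ K)] at c2
    have c3 := h3 K (Finset.self_mem_range_succ K)
    have c4 := hB K
    have c5 : Fh (tg K) ≤ Fh t := hFh_mono (le_trans (htg_leM K) htM)
    linarith [hMH]
  push_neg at htM
  set j : ℕ := Nat.floor (t * K / M) with hj_def
  have hM0 : (0:ℝ) < M := by linarith
  have htKM : 0 ≤ t * K / M := by positivity
  have hfl : (j:ℝ) ≤ t * K / M := Nat.floor_le htKM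
  have hjK : j < K := by
    have hx1 : t * K / M < K := by
      rw [div_lt_iff₀ hM0]
      nlinarith
    have hx2 : (j:ℝ) < K := lt_of_le_of_lt hfl hx1
    exact_mod_cast hx2
  have htgj_le : tg j ≤ t := by
    rw [htg_eq j (le_of_lt hjK), div_le_iff₀ hKpos]
    have h5 : (j:ℝ) * M ≤ (t * K / M) * M := mul_le_mul_of_nonneg_right hfl (le_of_lt hM0)
    have h6 : (t * K / M) * M = t * K := by field_simp
    linarith
  have ht_lt : t ≤ tg (j+1) := by
    rw [htg_eq (j+1) hjK]
    have hfl2 : t * K / M < (j:ℝ) + 1 := Nat.lt_floor_add_one _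
    rw [div_lt_iff₀ hM0] at hfl2
    rw [le_div_iff₀ hKpos]
    push_cast
    nlinarith
  have c2 := hUCj j
  have c3 := h3 j (Finset.mem_range.2 (by omega))
  have c4 := hB j
  have c5 : Fh (tg j) ≤ Fh t := hFh_mono htgj_le
  have c6 : H (σ₀ * t) ≤ H (σ₀ * tg (j+1)) :=
    hHmono (mul_le_mul_of_nonneg_left ht_lt (le_of_lt hσ₀))
  linarith

set_option maxHeartbeats 1000000 in
/-- Proposition 1 (consistency of the Gervini–Yohai filter). Let `X₁, X₂, ...` be
an i.i.d. sample with common law `P` having continuous distribution function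
`F₀((x - μ₀)/σ₀)`, `σ₀ > 0`. Let `F⁺` be a reference distribution function with
`sup_{u ≥ η} (F⁺(u) - F₀⁺(u)) ≤ 0`, where `F₀⁺` is the distribution function of
`|(X - μ₀)/σ₀|`. Let `T₀ₙ → μ₀` and `S₀ₙ → σ₀` almost surely, let
`F̂ₙ⁺(t) = (1/n) Σᵢ₌₁ⁿ 1{|Ẑᵢ| ≤ t}` with `Ẑᵢ = (Xᵢ - T₀ₙ)/S₀ₙ`, and define
`dₙ = sup_{t ≥ η} {F⁺(t) - F̂ₙ⁺(t)}⁺`. Then the proportion of flagged outliers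
`⌊n·dₙ⌋/n → 0` almost surely. -/
theorem gy_filter_flagged_proportion_tendsto_zero
    {Ω : Type*} [MeasurableSpace Ω] (μ : Measure Ω) [IsProbabilityMeasure μ]
    (X : ℕ → Ω → ℝ) (hXmeas : ∀ i, Measurable (X i))
    (hindep : iIndepFun X μ)
    (P : Measure ℝ) [IsProbabilityMeasure P] (hlaw : ∀ i, μ.map (X i) = P)
    (F₀ : ℝ → ℝ) (hF₀cont : Continuous F₀) (μ₀ σ₀ : ℝ) (hσ₀ : 0 < σ₀)
    (hcdf : ∀ x : ℝ, (P (Set.Iic x)).toReal = F₀ ((x - μ₀) / σ₀))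
    (Fplus : ℝ → ℝ) (η : ℝ)
    (hdom : ∀ u : ℝ, η ≤ u → Fplus u ≤ (P {x : ℝ | |(x - μ₀) / σ₀| ≤ u}).toReal)
    (T S : ℕ → Ω → ℝ)
    (hT : ∀ᵐ ω ∂μ, Tendsto (fun n => T n ω) atTop (nhds μ₀))
    (hS : ∀ᵐ ω ∂μ, Tendsto (fun n => S n ω) atTop (nhds σ₀))
    (hSpos : ∀ n ω, 0 < S n ω) :
    ∀ᵐ ω ∂μ,
      Tendsto (fun n : ℕ =>
          (⌊(n : ℝ) * ⨆ t : Set.Ici η,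
              max (Fplus t -
                (1 / n : ℝ) * ∑ i ∈ range n,
                  (if |(X i ω - T n ω) / S n ω| ≤ (t : ℝ) then (1 : ℝ) else 0)) 0⌋ : ℝ) / n)
        atTop (nhds 0) := by
  classical
  set Fc : ℝ → ℝ := fun x => F₀ ((x - μ₀)/σ₀) with hFc_def
  have hFc_cont : Continuous Fc := hF₀cont.comp (by fun_prop)
  have hcdf' : ∀ x, (P (Set.Iic x)).toReal = Fc x := hcdf
  set H : ℝ → ℝ := fun r => (P {y : ℝ | |y - μ₀| ≤ r}).toReal with hH_def
  -- basic properties of H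
  have hHmono : Monotone H := by
    intro a b hab
    exact ENNReal.toReal_mono (measure_ne_top _ _)
      (measure_mono (fun y hy => le_trans hy hab))
  have hHle1 : ∀ r, H r ≤ 1 := by
    intro r
    have h1 : P {y : ℝ | |y - μ₀| ≤ r} ≤ P Set.univ := measure_mono (Set.subset_univ _)
    have := ENNReal.toReal_mono (measure_ne_top _ _) h1
    simpa [measure_univ] using this
  have hHset : ∀ r : ℝ, 0 ≤ r → {y : ℝ | |y - μ₀| ≤ r} = Set.Icc (μ₀ - r) (μ₀ + r) := by
    intro r _
    ext y
    rw [Set.mem_setOf_eq, Set.mem_Icc, abs_le]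
    constructor <;> intro h <;> exact ⟨by linarith [h.1, h.2], by linarith [h.1, h.2]⟩
  have hHeq : ∀ r : ℝ, 0 ≤ r → H r = Fc (μ₀ + r) - Fc (μ₀ - r) := by
    intro r hr
    show (P {y : ℝ | |y - μ₀| ≤ r}).toReal = _
    rw [hHset r hr]
    exact gy_aux_Icc P Fc hFc_cont hcdf' (by linarith)
  have hHneg : ∀ r : ℝ, r < 0 → H r = 0 := by
    intro r hr
    show (P {y : ℝ | |y - μ₀| ≤ r}).toReal = 0
    have : {y : ℝ | |y - μ₀| ≤ r} = ∅ := by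
      ext y
      simp only [Set.mem_setOf_eq, Set.mem_empty_iff_false, iff_false, not_le]
      exact lt_of_lt_of_le hr (abs_nonneg _)
    rw [this, measure_empty]
    simp
  have hH0 : H 0 = 0 := by
    rw [hHeq 0 le_rfl]
    simp
  have hHG : H = fun r => Fc (μ₀ + max r 0) - Fc (μ₀ - max r 0) := by
    funext r
    rcases le_or_gt 0 r with hr | hr
    · rw [max_eq_left hr]
      exact hHeq r hr
    · rw [max_eq_right (le_of_lt hr), hHneg r hr]
      simp
  have hHcont : Continuous H := by
    rw [hHG]
    have h1 : Continuous fun r : ℝ => μ₀ + max r 0 := by fun_prop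
    have h2 : Continuous fun r : ℝ => μ₀ - max r 0 := by fun_prop
    exact (hFc_cont.comp h1).sub (hFc_cont.comp h2)
  -- H tends to 1 at infinity
  have htoReal : Tendsto ENNReal.toReal (𝓝 (1 : ENNReal)) (𝓝 1) := by
    simpa using (ENNReal.tendsto_toReal (a := 1) (by simp))
  have hIic_top : Tendsto (fun x : ℝ => (P (Set.Iic x)).toReal) atTop (𝓝 1) := by
    have h1 := tendsto_measure_Iic_atTop P
    rw [measure_univ] at h1
    exact htoReal.comp h1
  have hIci_bot : Tendsto (fun x : ℝ => (P (Set.Ici x)).toReal) atBot (𝓝 1) := by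
    have h1 := tendsto_measure_Ici_atBot P
    rw [measure_univ] at h1
    exact htoReal.comp h1
  have hHtop : Tendsto H atTop (𝓝 1) := by
    have h1 : Tendsto (fun r : ℝ => Fc (μ₀ + r)) atTop (𝓝 1) := by
      have := hIic_top.comp (tendsto_atTop_add_const_left atTop μ₀ tendsto_id)
      refine this.congr fun r => ?_
      exact hcdf' (μ₀ + r)
    have h2 : Tendsto (fun r : ℝ => Fc (μ₀ - r)) atTop (𝓝 0) := by
      have hub : ∀ r : ℝ, Fc (μ₀ - r) ≤ 1 - (P (Set.Ici (μ₀ - r + 1))).toReal := by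
        intro r
        have hsub : Set.Iic (μ₀ - r) ⊆ (Set.Ici (μ₀ - r + 1))ᶜ := by
          intro y hy
          simp only [Set.mem_compl_iff, Set.mem_Ici, not_le]
          have : y ≤ μ₀ - r := hy
          linarith
        have hc : P ((Set.Ici (μ₀ - r + 1))ᶜ) = 1 - P (Set.Ici (μ₀ - r + 1)) := by
          rw [measure_compl measurableSet_Ici (measure_ne_top _ _), measure_univ]
        have h3 : (P (Set.Iic (μ₀ - r))).toReal ≤ (P ((Set.Ici (μ₀ - r + 1))ᶜ)).toReal :=
          ENNReal.toReal_mono (measure_ne_top _ _) (measure_mono hsub)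
        rw [hc, ENNReal.toReal_sub_of_le prob_le_one (by simp)] at h3
        simp only [ENNReal.toReal_one] at h3
        rw [← hcdf' (μ₀ - r)]
        exact h3
      have hlb : ∀ r : ℝ, 0 ≤ Fc (μ₀ - r) := by
        intro r
        rw [← hcdf' (μ₀ - r)]
        exact ENNReal.toReal_nonneg
      have hgl : Tendsto (fun r : ℝ => 1 - (P (Set.Ici (μ₀ - r + 1))).toReal) atTop (𝓝 0) := by
        have harg : Tendsto (fun r : ℝ => μ₀ - r + 1) atTop atBot := by
          apply tendsto_atBot_add_const_right
          apply tendsto_atBot_add_const_left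
          exact tendsto_neg_atBot_iff.2 tendsto_id
        have := hIci_bot.comp harg
        have h4 := (tendsto_const_nhds (x := (1:ℝ)) (f := atTop (α := ℝ))).sub this
        simpa using h4
      exact tendsto_of_tendsto_of_tendsto_of_le_of_le tendsto_const_nhds hgl hlb hub
    have h3 := h1.sub h2
    rw [sub_zero] at h3
    refine (tendsto_congr' ?_).2 h3
    filter_upwards [eventually_ge_atTop (0:ℝ)] with r hr
    exact hHeq r hr
  -- domination
  have hdom' : ∀ t : ℝ, η ≤ t → Fplus t ≤ H (σ₀ * t) := by
    intro t ht
    have hset : {x : ℝ | |(x - μ₀) / σ₀| ≤ t} = {y : ℝ | |y - μ₀| ≤ σ₀ * t} := by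
      ext y
      rw [Set.mem_setOf_eq, Set.mem_setOf_eq, abs_div, abs_of_pos hσ₀, div_le_iff₀ hσ₀,
        mul_comm]
    have := hdom t ht
    rwa [hset] at this
  -- SLLN almost sure event
  have hEae : ∀ᵐ ω ∂μ, ∀ q : ℚ, Tendsto (fun n : ℕ =>
      (∑ i ∈ range n, (if |X i ω - μ₀| ≤ (q:ℝ) then (1:ℝ) else 0)) / n) atTop
      (𝓝 (H q)) := by
    rw [ae_all_iff]
    intro q
    exact gy_aux_slln μ X hXmeas hindep P hlaw μ₀ q
  filter_upwards [hT, hS, hEae] with ω hTω hSω hEω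
  -- now a deterministic statement
  haveI : Nonempty (Set.Ici η) := Set.nonempty_Ici.to_subtype
  set d : ℕ → ℝ := fun n => ⨆ t : Set.Ici η,
      max (Fplus t - (1 / n : ℝ) * ∑ i ∈ range n,
        (if |(X i ω - T n ω) / S n ω| ≤ (t : ℝ) then (1 : ℝ) else 0)) 0 with hd_def
  show Tendsto (fun n : ℕ => ((⌊(n : ℝ) * d n⌋ : ℤ) : ℝ) / n) atTop (𝓝 0)
  have hcore : ∀ ε : ℝ, 0 < ε → ∀ᶠ n : ℕ in atTop, ∀ t : ℝ, η ≤ t →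
      Fplus t ≤ (1/n : ℝ) * ∑ i ∈ range n,
        (if |(X i ω - T n ω)/S n ω| ≤ t then (1:ℝ) else 0) + ε := by
    intro ε hε
    exact gy_aux_core (fun i => X i ω) (fun n => T n ω) (fun n => S n ω) μ₀ σ₀ η H Fplus
      hσ₀ (fun n => hSpos n ω) hTω hSω hHmono hHcont hH0 hHle1 hHtop hEω hdom' hε
  have hFhnn : ∀ (n : ℕ) (t : ℝ), 0 ≤ (1/n : ℝ) * ∑ i ∈ range n,
      (if |(X i ω - T n ω)/S n ω| ≤ t then (1:ℝ) else 0) := by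
    intro n t
    refine mul_nonneg (by positivity) (Finset.sum_nonneg fun i _ => ?_)
    split_ifs <;> norm_num
  have hFple1 : ∀ t : ℝ, η ≤ t → Fplus t ≤ 1 := fun t ht =>
    le_trans (hdom' t ht) (hHle1 _)
  have hbdd : ∀ n : ℕ, BddAbove (Set.range fun t : Set.Ici η =>
      max (Fplus t - (1 / n : ℝ) * ∑ i ∈ range n,
        (if |(X i ω - T n ω) / S n ω| ≤ (t : ℝ) then (1 : ℝ) else 0)) 0) := by
    intro n
    refine ⟨1, ?_⟩
    rintro v ⟨t, rfl⟩
    refine max_le ?_ zero_le_one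
    have := hFple1 t t.2
    have := hFhnn n t
    linarith
  have hd0 : ∀ n, 0 ≤ d n := by
    intro n
    refine le_trans (le_max_right _ 0) (le_ciSup (hbdd n) ⟨η, le_refl η⟩)
  have hdlim : Tendsto d atTop (𝓝 0) := by
    refine Metric.tendsto_atTop.2 fun ε hε => ?_
    have h2 : (0:ℝ) < ε/2 := by linarith
    obtain ⟨N, hN⟩ := (eventually_atTop).1 (hcore (ε/2) h2)
    refine ⟨N, fun n hn => ?_⟩
    have hdle : d n ≤ ε/2 := by
      refine ciSup_le fun t => ?_
      refine max_le ?_ (le_of_lt h2)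
      have := hN n hn t t.2
      linarith
    rw [Real.dist_eq, sub_zero, abs_of_nonneg (hd0 n)]
    linarith
  refine tendsto_of_tendsto_of_tendsto_of_le_of_le' tendsto_const_nhds hdlim ?_ ?_
  · refine Eventually.of_forall fun n => ?_
    have h1 : (0:ℝ) ≤ (n:ℝ) * d n := mul_nonneg (Nat.cast_nonneg n) (hd0 n)
    have h2 : (0:ℤ) ≤ ⌊(n:ℝ) * d n⌋ := Int.floor_nonneg.2 h1
    have h3 : (0:ℝ) ≤ ((⌊(n:ℝ) * d n⌋ : ℤ) : ℝ) := by exact_mod_cast h2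
    positivity
  · filter_upwards [eventually_ge_atTop 1] with n hn
    have hnpos : (0:ℝ) < n := by exact_mod_cast hn
    rw [div_le_iff₀ hnpos]
    calc ((⌊(n:ℝ) * d n⌋ : ℤ) : ℝ) ≤ (n:ℝ) * d n := Int.floor_le _
      _ = d n * n := by ring
end

section
/- Let Z₁, Z₂, ... be i.i.d. random vectors in ℝᵏ with distribution Q, let f: ℝᵏ × ℝʰ → ℝ be continuous, and suppose for some δ > 0 that E_Q[sup_{‖λ-λ₀‖≤δ} |f(Z,λ)|] < ∞. If λ̂ₙ → λ₀ almost surely, then (1/n) Σᵢ₌₁ⁿ f(Zᵢ, λ̂ₙ) → E_Q[f(Z, λ₀)] almost surely. -/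
open Filter MeasureTheory ProbabilityTheory Finset

/-- Uniform strong law of large numbers (Yohai 1985, Lemma 1). Let `Z₁, Z₂, ...`
be i.i.d. random vectors in `ℝᵏ` with common distribution `Q`, let
`f : ℝᵏ × ℝʰ → ℝ` be continuous, and suppose for some `δ > 0` that
`E_Q[sup_{‖λ - λ₀‖ ≤ δ} |f(Z, λ)|] < ∞`. If `λ̂ₙ → λ₀` almost surely, then
`(1/n) Σᵢ₌₁ⁿ f(Zᵢ, λ̂ₙ) → E_Q[f(Z, λ₀)]` almost surely. -/
theorem uniform_slln_yohai
    {Ω : Type*} [MeasurableSpace Ω] (μ : Measure Ω) [IsProbabilityMeasure μ]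
    (k h : ℕ) (Z : ℕ → Ω → EuclideanSpace ℝ (Fin k))
    (hZmeas : ∀ i, Measurable (Z i))
    (hindep : iIndepFun Z μ)
    (Q : Measure (EuclideanSpace ℝ (Fin k))) [IsProbabilityMeasure Q]
    (hlaw : ∀ i, μ.map (Z i) = Q)
    (f : EuclideanSpace ℝ (Fin k) → EuclideanSpace ℝ (Fin h) → ℝ)
    (hf : Continuous (fun q : EuclideanSpace ℝ (Fin k) × EuclideanSpace ℝ (Fin h) => f q.1 q.2))
    (lam₀ : EuclideanSpace ℝ (Fin h)) (δ : ℝ) (hδ : 0 < δ)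
    (hint : Integrable
      (fun z => ⨆ lam : {lam : EuclideanSpace ℝ (Fin h) // ‖lam - lam₀‖ ≤ δ}, |f z lam|) Q)
    (lamhat : ℕ → Ω → EuclideanSpace ℝ (Fin h))
    (hlamhat : ∀ᵐ ω ∂μ, Tendsto (fun n => lamhat n ω) atTop (nhds lam₀)) :
    ∀ᵐ ω ∂μ,
      Tendsto (fun n : ℕ => (1 / n : ℝ) * ∑ i ∈ range n, f (Z i ω) (lamhat n ω))
        atTop (nhds (∫ z, f z lam₀ ∂Q)) := by
  classical
  set g : (EuclideanSpace ℝ (Fin k)) → ℝ := fun z => ⨆ lam : {lam : (EuclideanSpace ℝ (Fin h)) // ‖lam - lam₀‖ ≤ δ}, |f z lam| with hg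
  -- radii
  set ρ : ℕ → ℝ := fun m => δ / (m + 1) with hρ
  have hρpos : ∀ m, 0 < ρ m := fun m => by positivity
  have hρle : ∀ m, ρ m ≤ δ := fun m => by
    rw [hρ]
    exact div_le_self hδ.le (le_add_of_nonneg_left (Nat.cast_nonneg m))
  set K : ℕ → Set (EuclideanSpace ℝ (Fin h)) := fun m => Metric.closedBall lam₀ (ρ m) with hK
  have hKcompact : ∀ m, IsCompact (K m) := fun m => isCompact_closedBall _ _
  have hmem₀ : ∀ m, lam₀ ∈ K m := fun m => Metric.mem_closedBall_self (hρpos m).le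
  have hKsub : ∀ m, K m ⊆ Metric.closedBall lam₀ δ := fun m =>
    Metric.closedBall_subset_closedBall (hρle m)
  have hfz : ∀ z : (EuclideanSpace ℝ (Fin k)), Continuous (f z) := fun z => by exact hf.comp (Continuous.prodMk_right z)
  -- envelopes
  set U : ℕ → (EuclideanSpace ℝ (Fin k)) → ℝ := fun m z => sSup (f z '' K m) with hU
  set L : ℕ → (EuclideanSpace ℝ (Fin k)) → ℝ := fun m z => sInf (f z '' K m) with hL
  have hUcont : ∀ m, Continuous (U m) := fun m => (hKcompact m).continuous_sSup (by exact hf)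
  have hLcont : ∀ m, Continuous (L m) := fun m => (hKcompact m).continuous_sInf (by exact hf)
  have hne : ∀ m z, (f z '' K m).Nonempty := fun m z => ⟨_, Set.mem_image_of_mem _ (hmem₀ m)⟩
  have hbddA : ∀ m z, BddAbove (f z '' K m) := fun m z =>
    ((hKcompact m).image (hfz z)).bddAbove
  have hbddB : ∀ m z, BddBelow (f z '' K m) := fun m z =>
    ((hKcompact m).image (hfz z)).bddBelow
  -- pointwise domination by g
  have habs_le : ∀ z : (EuclideanSpace ℝ (Fin k)), ∀ lam : (EuclideanSpace ℝ (Fin h)), ‖lam - lam₀‖ ≤ δ → |f z lam| ≤ g z := by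
    intro z lam hlam
    have hbdd : BddAbove (Set.range fun l : {l : (EuclideanSpace ℝ (Fin h)) // ‖l - lam₀‖ ≤ δ} => |f z l|) := by
      have : Set.range (fun l : {l : (EuclideanSpace ℝ (Fin h)) // ‖l - lam₀‖ ≤ δ} => |f z (l : (EuclideanSpace ℝ (Fin h)))|)
          = (fun l => |f z l|) '' Metric.closedBall lam₀ δ := by
        ext x
        simp only [Set.mem_range, Set.mem_image, Metric.mem_closedBall, Subtype.exists,
          dist_eq_norm]
        constructor
        · rintro ⟨a, ha, rfl⟩; exact ⟨a, ha, rfl⟩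
        · rintro ⟨a, ha, rfl⟩; exact ⟨a, ha, rfl⟩
      rw [this]
      exact ((isCompact_closedBall _ _).image ((hfz z).abs)).bddAbove
    exact le_ciSup hbdd ⟨lam, hlam⟩
  have hUle : ∀ m z, U m z ≤ g z := by
    intro m z
    refine csSup_le (hne m z) ?_
    rintro y ⟨lam, hlam, rfl⟩
    exact (le_abs_self _).trans (habs_le z lam (by
      have := hKsub m hlam
      rwa [Metric.mem_closedBall, dist_eq_norm] at this))
  have hUge : ∀ m z, f z lam₀ ≤ U m z := fun m z =>
    le_csSup (hbddA m z) (Set.mem_image_of_mem _ (hmem₀ m))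
  have hLge : ∀ m z, -g z ≤ L m z := by
    intro m z
    refine le_csInf (hne m z) ?_
    rintro y ⟨lam, hlam, rfl⟩
    have := habs_le z lam (by
      have := hKsub m hlam
      rwa [Metric.mem_closedBall, dist_eq_norm] at this)
    linarith [abs_le.mp this |>.1]
  have hLle : ∀ m z, L m z ≤ f z lam₀ := fun m z =>
    csInf_le (hbddB m z) (Set.mem_image_of_mem _ (hmem₀ m))
  have hf0_le : ∀ z, |f z lam₀| ≤ g z := fun z => habs_le z lam₀ (by simp [hδ.le])
  have hUabs : ∀ m z, |U m z| ≤ g z := by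
    intro m z
    rw [abs_le]
    refine ⟨?_, hUle m z⟩
    have := hUge m z
    have h2 := (abs_le.mp (hf0_le z)).1
    linarith
  have hLabs : ∀ m z, |L m z| ≤ g z := by
    intro m z
    rw [abs_le]
    refine ⟨hLge m z, ?_⟩
    have := hLle m z
    have h2 := (abs_le.mp (hf0_le z)).2
    linarith
  -- integrability
  have hIntU : ∀ m, Integrable (U m) Q := fun m =>
    hint.mono' ((hUcont m).aestronglyMeasurable)
      (ae_of_all _ fun z => by simpa [Real.norm_eq_abs] using hUabs m z)
  have hIntL : ∀ m, Integrable (L m) Q := fun m =>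
    hint.mono' ((hLcont m).aestronglyMeasurable)
      (ae_of_all _ fun z => by simpa [Real.norm_eq_abs] using hLabs m z)
  -- pointwise convergence of envelopes
  have hUtend : ∀ z, Tendsto (fun m => U m z) atTop (nhds (f z lam₀)) := by
    intro z
    rw [Metric.tendsto_atTop]
    intro ε hε
    have hc : ContinuousAt (f z) lam₀ := (hfz z).continuousAt
    rw [Metric.continuousAt_iff] at hc
    obtain ⟨r, hr, hcr⟩ := hc (ε / 2) (by positivity)
    obtain ⟨N, hN⟩ := exists_nat_gt (δ / r)
    refine ⟨N, fun m hm => ?_⟩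
    have hmr : ρ m < r := by
      rw [hρ, div_lt_iff₀ (by positivity)]
      have h1 : δ / r < (m : ℝ) + 1 := lt_of_lt_of_le hN (by exact_mod_cast Nat.le_succ_of_le hm)
      calc δ = (δ / r) * r := by field_simp
        _ < ((m : ℝ) + 1) * r := by
            exact mul_lt_mul_of_pos_right h1 hr
        _ = r * ((m : ℝ) + 1) := by ring
    have hUb : U m z ≤ f z lam₀ + ε / 2 := by
      refine csSup_le (hne m z) ?_
      rintro y ⟨lam, hlam, rfl⟩
      have hd : dist lam lam₀ < r := lt_of_le_of_lt (Metric.mem_closedBall.mp hlam) hmr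
      have := hcr hd
      rw [Real.dist_eq] at this
      linarith [abs_le.mp this.le |>.1, abs_le.mp this.le |>.2]
    have hlb := hUge m z
    rw [Real.dist_eq, abs_sub_lt_iff]
    constructor <;> linarith
  have hLtend : ∀ z, Tendsto (fun m => L m z) atTop (nhds (f z lam₀)) := by
    intro z
    rw [Metric.tendsto_atTop]
    intro ε hε
    have hc : ContinuousAt (f z) lam₀ := (hfz z).continuousAt
    rw [Metric.continuousAt_iff] at hc
    obtain ⟨r, hr, hcr⟩ := hc (ε / 2) (by positivity)
    obtain ⟨N, hN⟩ := exists_nat_gt (δ / r)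
    refine ⟨N, fun m hm => ?_⟩
    have hmr : ρ m < r := by
      rw [hρ, div_lt_iff₀ (by positivity)]
      have h1 : δ / r < (m : ℝ) + 1 := lt_of_lt_of_le hN (by exact_mod_cast Nat.le_succ_of_le hm)
      calc δ = (δ / r) * r := by field_simp
        _ < ((m : ℝ) + 1) * r := mul_lt_mul_of_pos_right h1 hr
        _ = r * ((m : ℝ) + 1) := by ring
    have hLb : f z lam₀ - ε / 2 ≤ L m z := by
      refine le_csInf (hne m z) ?_
      rintro y ⟨lam, hlam, rfl⟩
      have hd : dist lam lam₀ < r := lt_of_le_of_lt (Metric.mem_closedBall.mp hlam) hmr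
      have := hcr hd
      rw [Real.dist_eq] at this
      linarith [abs_le.mp this.le |>.1, abs_le.mp this.le |>.2]
    have hub := hLle m z
    rw [Real.dist_eq, abs_sub_lt_iff]
    constructor <;> linarith
  -- convergence of integrals
  have hlimU : Tendsto (fun m => ∫ z, U m z ∂Q) atTop (nhds (∫ z, f z lam₀ ∂Q)) := by
    refine tendsto_integral_of_dominated_convergence g
      (fun m => (hUcont m).aestronglyMeasurable) hint
      (fun m => ae_of_all _ fun z => by simpa [Real.norm_eq_abs] using hUabs m z)
      (ae_of_all _ fun z => hUtend z)
  have hlimL : Tendsto (fun m => ∫ z, L m z ∂Q) atTop (nhds (∫ z, f z lam₀ ∂Q)) := by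
    refine tendsto_integral_of_dominated_convergence g
      (fun m => (hLcont m).aestronglyMeasurable) hint
      (fun m => ae_of_all _ fun z => by simpa [Real.norm_eq_abs] using hLabs m z)
      (ae_of_all _ fun z => hLtend z)
  -- identical distribution of Z's
  have hident : ∀ i, IdentDistrib (Z i) (Z 0) μ μ := fun i =>
    ⟨(hZmeas i).aemeasurable, (hZmeas 0).aemeasurable, by rw [hlaw i, hlaw 0]⟩
  -- SLLN for the envelopes
  have hSLLN : ∀ (φ : (EuclideanSpace ℝ (Fin k)) → ℝ), Continuous φ → Integrable φ Q →
      ∀ᵐ ω ∂μ, Tendsto (fun n : ℕ => (∑ i ∈ range n, φ (Z i ω)) / n) atTop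
        (nhds (∫ z, φ z ∂Q)) := by
    intro φ hφc hφi
    have hX0 : Integrable (fun ω => φ (Z 0 ω)) μ := by
      have h1 : Integrable φ (μ.map (Z 0)) := by rw [hlaw 0]; exact hφi
      exact (integrable_map_measure hφc.aestronglyMeasurable (hZmeas 0).aemeasurable).1 h1
    have hpair : Pairwise (Function.onFun (IndepFun · · μ) fun i ω => φ (Z i ω)) := fun i j hij =>
      (hindep.indepFun hij).comp hφc.measurable hφc.measurable
    have hid : ∀ i, IdentDistrib (fun ω => φ (Z i ω)) (fun ω => φ (Z 0 ω)) μ μ := fun i =>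
      (hident i).comp hφc.measurable
    have := strong_law_ae_real (fun i ω => φ (Z i ω)) hX0 hpair hid
    have heq : (∫ ω, φ (Z 0 ω) ∂μ) = ∫ z, φ z ∂Q := by
      rw [← hlaw 0, integral_map (hZmeas 0).aemeasurable hφc.aestronglyMeasurable]
    rw [heq] at this
    exact this
  have hUslln : ∀ᵐ ω ∂μ, ∀ m, Tendsto (fun n : ℕ => (∑ i ∈ range n, U m (Z i ω)) / n) atTop
      (nhds (∫ z, U m z ∂Q)) := ae_all_iff.2 fun m => hSLLN (U m) (hUcont m) (hIntU m)
  have hLslln : ∀ᵐ ω ∂μ, ∀ m, Tendsto (fun n : ℕ => (∑ i ∈ range n, L m (Z i ω)) / n) atTop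
      (nhds (∫ z, L m z ∂Q)) := ae_all_iff.2 fun m => hSLLN (L m) (hLcont m) (hIntL m)
  -- assemble
  filter_upwards [hlamhat, hUslln, hLslln] with ω hωlam hωU hωL
  set c := ∫ z, f z lam₀ ∂Q with hc
  rw [Metric.tendsto_atTop]
  intro ε hε
  -- choose m with both envelope integrals within ε/3 of c
  obtain ⟨m, hmU, hmL⟩ : ∃ m, |(∫ z, U m z ∂Q) - c| < ε / 3 ∧ |(∫ z, L m z ∂Q) - c| < ε / 3 := by
    have h1 := (Metric.tendsto_atTop.1 hlimU) (ε / 3) (by positivity)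
    have h2 := (Metric.tendsto_atTop.1 hlimL) (ε / 3) (by positivity)
    obtain ⟨N1, hN1⟩ := h1
    obtain ⟨N2, hN2⟩ := h2
    refine ⟨max N1 N2, ?_, ?_⟩
    · have := hN1 (max N1 N2) (le_max_left _ _); rwa [Real.dist_eq] at this
    · have := hN2 (max N1 N2) (le_max_right _ _); rwa [Real.dist_eq] at this
  -- eventually bounds
  obtain ⟨N3, hN3⟩ := (Metric.tendsto_atTop.1 (hωU m)) (ε / 3) (by positivity)
  obtain ⟨N4, hN4⟩ := (Metric.tendsto_atTop.1 (hωL m)) (ε / 3) (by positivity)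
  obtain ⟨N5, hN5⟩ := (Metric.tendsto_atTop.1 hωlam) (ρ m) (hρpos m)
  refine ⟨max (max N3 N4) (max N5 1), fun n hn => ?_⟩
  have hn3 : N3 ≤ n := le_trans (le_trans (le_max_left _ _) (le_max_left _ _)) hn
  have hn4 : N4 ≤ n := le_trans (le_trans (le_max_right _ _) (le_max_left _ _)) hn
  have hn5 : N5 ≤ n := le_trans (le_trans (le_max_left _ _) (le_max_right _ _)) hn
  have hn1 : 1 ≤ n := le_trans (le_trans (le_max_right _ _) (le_max_right _ _)) hn
  have hmemK : lamhat n ω ∈ K m := by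
    have := hN5 n hn5
    exact Metric.mem_closedBall.mpr (le_of_lt this)
  have hterm : ∀ i, L m (Z i ω) ≤ f (Z i ω) (lamhat n ω) ∧
      f (Z i ω) (lamhat n ω) ≤ U m (Z i ω) := fun i =>
    ⟨csInf_le (hbddB m _) (Set.mem_image_of_mem _ hmemK),
     le_csSup (hbddA m _) (Set.mem_image_of_mem _ hmemK)⟩
  have hnpos : (0 : ℝ) < n := by exact_mod_cast hn1
  set A := (1 / n : ℝ) * ∑ i ∈ range n, f (Z i ω) (lamhat n ω) with hA
  have hAle : A ≤ (∑ i ∈ range n, U m (Z i ω)) / n := by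
    rw [hA, one_div, div_eq_inv_mul]
    exact mul_le_mul_of_nonneg_left (Finset.sum_le_sum fun i _ => (hterm i).2)
      (by positivity)
  have hAge : (∑ i ∈ range n, L m (Z i ω)) / n ≤ A := by
    rw [hA, one_div, div_eq_inv_mul]
    exact mul_le_mul_of_nonneg_left (Finset.sum_le_sum fun i _ => (hterm i).1)
      (by positivity)
  have hU3 := hN3 n hn3
  have hL4 := hN4 n hn4
  rw [Real.dist_eq] at hU3 hL4
  rw [Real.dist_eq, abs_sub_lt_iff]
  have h1 := abs_sub_lt_iff.1 hU3
  have h2 := abs_sub_lt_iff.1 hL4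
  have h3 := abs_sub_lt_iff.1 hmU
  have h4 := abs_sub_lt_iff.1 hmL
  constructor <;> linarith [hAle, hAge, h1.1, h1.2, h2.1, h2.2, h3.1, h3.2, h4.1, h4.2]
end
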